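/- With respect to the embedding 𝔰𝔩(n+1) ↪ 𝔰𝔬(n+1,n+1), A ↦ block-diag(A,-Aᵀ), and the trace form B̃(X,Y) = tr(XY) on 𝔰𝔬(n+1,n+1), the orthogonal complement 𝔤^⊥ of the image 𝔤 of 𝔰𝔩(n+1) is the space of block matrices [[λI, S],[T, -λI]] with λ ∈ ℝ and S,T skew-symmetric; in particular 𝔰𝔬(n+1,n+1) = 𝔤 ⊕ 𝔤^⊥ as vector spaces. -/

import Mathlib

open Matrix

/-- The bilinear form h = [[0,I],[I,0]]. -/
def hmat (n : ℕ) : Matrix (Fin (n+1) ⊕ Fin (n+1)) (Fin (n+1) ⊕ Fin (n+1)) ℝ :=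
  Matrix.fromBlocks 0 1 1 0

lemma trace_fromBlocks' {m : ℕ} (A B C D : Matrix (Fin m) (Fin m) ℝ) :
    Matrix.trace (Matrix.fromBlocks A B C D) = Matrix.trace A + Matrix.trace D := by
  simp [Matrix.trace, Fintype.sum_sum_type, Matrix.fromBlocks, Matrix.diag]

lemma trace_mul_std {m : ℕ} (P : Matrix (Fin m) (Fin m) ℝ) (i j : Fin m) :
    Matrix.trace (P * Matrix.single i j (1:ℝ)) = P j i := by
  simp only [Matrix.trace, Matrix.diag, Matrix.mul_apply, Matrix.single,
    Matrix.of_apply, mul_ite, mul_one, mul_zero]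
  simp [ite_and]

lemma eq_smul_one {m : ℕ} (P : Matrix (Fin (m+1)) (Fin (m+1)) ℝ)
    (h : ∀ A : Matrix (Fin (m+1)) (Fin (m+1)) ℝ, Matrix.trace A = 0 →
      Matrix.trace (P * A) = 0) : P = (P 0 0) • 1 := by
  ext i j
  by_cases hij : i = j
  · subst hij
    have h1 := h (Matrix.single i i 1 - Matrix.single 0 0 1) (by simp)
    rw [Matrix.mul_sub, Matrix.trace_sub, trace_mul_std, trace_mul_std, sub_eq_zero] at h1
    simp [h1, Matrix.one_apply]
  · have h1 := h (Matrix.single j i 1) (by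
      exact Matrix.trace_single_eq_of_ne j i 1 (Ne.symm hij))
    rw [trace_mul_std] at h1
    simp [h1, Matrix.one_apply, hij]

lemma so_struct (n : ℕ) (X : Matrix (Fin (n+1) ⊕ Fin (n+1)) (Fin (n+1) ⊕ Fin (n+1)) ℝ)
    (hX : Xᵀ * hmat n + hmat n * X = 0) :
    ∃ P Q R : Matrix (Fin (n+1)) (Fin (n+1)) ℝ,
      Qᵀ = -Q ∧ Rᵀ = -R ∧ X = Matrix.fromBlocks P Q R (-Pᵀ) := by
  obtain ⟨P, Q, R, W, hXb⟩ : ∃ P Q R W, X = Matrix.fromBlocks P Q R W :=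
    ⟨_, _, _, _, (Matrix.fromBlocks_toBlocks X).symm⟩
  rw [hXb, hmat, Matrix.fromBlocks_transpose, Matrix.fromBlocks_multiply,
    Matrix.fromBlocks_multiply, Matrix.fromBlocks_add, ← Matrix.fromBlocks_zero,
    Matrix.fromBlocks_inj] at hX
  simp only [Matrix.mul_zero, Matrix.mul_one, Matrix.zero_mul, Matrix.one_mul,
    zero_add, add_zero] at hX
  obtain ⟨h1, h2, h3, h4⟩ := hX
  refine ⟨P, Q, R, ?_, ?_, ?_⟩
  · linear_combination (norm := abel) h4
  · linear_combination (norm := abel) h1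
  · rw [hXb]
    have : W = -Pᵀ := by linear_combination (norm := abel) h2
    rw [this]

/-- With respect to the trace form on so(n+1,n+1), the orthogonal complement of the
embedded copy of sl(n+1) (via A ↦ block-diag(A,-A^T)) consists of the block matrices
[[λI,S],[T,-λI]] with S,T skew-symmetric; and so(n+1,n+1) = g ⊕ g^⊥ as vector spaces. -/
theorem stmt_11 (n : ℕ) :
    (∀ X : Matrix (Fin (n+1) ⊕ Fin (n+1)) (Fin (n+1) ⊕ Fin (n+1)) ℝ,
      Xᵀ * hmat n + hmat n * X = 0 →
      ((∀ A : Matrix (Fin (n+1)) (Fin (n+1)) ℝ, Matrix.trace A = 0 →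
          Matrix.trace (X * Matrix.fromBlocks A 0 0 (-Aᵀ)) = 0) ↔
        ∃ (lam : ℝ) (S T : Matrix (Fin (n+1)) (Fin (n+1)) ℝ),
          Sᵀ = -S ∧ Tᵀ = -T ∧
          X = Matrix.fromBlocks (lam • 1) S T (-(lam • (1 : Matrix (Fin (n+1)) (Fin (n+1)) ℝ))))) ∧
    (∀ X : Matrix (Fin (n+1) ⊕ Fin (n+1)) (Fin (n+1) ⊕ Fin (n+1)) ℝ,
      Xᵀ * hmat n + hmat n * X = 0 →
      ∃ (A : Matrix (Fin (n+1)) (Fin (n+1)) ℝ) (lam : ℝ)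
        (S T : Matrix (Fin (n+1)) (Fin (n+1)) ℝ),
        Matrix.trace A = 0 ∧ Sᵀ = -S ∧ Tᵀ = -T ∧
        X = Matrix.fromBlocks A 0 0 (-Aᵀ)
          + Matrix.fromBlocks (lam • 1) S T (-(lam • 1))) ∧
    (∀ (A : Matrix (Fin (n+1)) (Fin (n+1)) ℝ) (lam : ℝ)
        (S T : Matrix (Fin (n+1)) (Fin (n+1)) ℝ),
      Matrix.trace A = 0 → Sᵀ = -S → Tᵀ = -T →
      Matrix.fromBlocks A 0 0 (-Aᵀ) = Matrix.fromBlocks (lam • 1) S T (-(lam • 1)) →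
      Matrix.fromBlocks A 0 0 (-Aᵀ)
        = (0 : Matrix (Fin (n+1) ⊕ Fin (n+1)) (Fin (n+1) ⊕ Fin (n+1)) ℝ)) := by
  have key : ∀ (P : Matrix (Fin (n+1)) (Fin (n+1)) ℝ)
      (A : Matrix (Fin (n+1)) (Fin (n+1)) ℝ) (Q R W : Matrix (Fin (n+1)) (Fin (n+1)) ℝ),
      Matrix.trace (Matrix.fromBlocks P Q R W * Matrix.fromBlocks A 0 0 (-Aᵀ))
        = Matrix.trace (P * A) - Matrix.trace (W * Aᵀ) := by
    intro P A Q R W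
    rw [Matrix.fromBlocks_multiply, trace_fromBlocks']
    simp [Matrix.mul_neg, sub_eq_add_neg]
  refine ⟨?_, ?_, ?_⟩
  · intro X hX
    obtain ⟨P, Q, R, hQ, hR, hXb⟩ := so_struct n X hX
    constructor
    · intro horth
      refine ⟨P 0 0, Q, R, hQ, hR, ?_⟩
      have hP : P = (P 0 0) • 1 := by
        apply eq_smul_one
        intro A hA
        have := horth A hA
        rw [hXb, key] at this
        have h2 : Matrix.trace ((-Pᵀ) * Aᵀ) = -Matrix.trace (P * A) := by
          rw [Matrix.neg_mul, Matrix.trace_neg, ← Matrix.transpose_mul,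
            Matrix.trace_transpose, Matrix.trace_mul_comm]
        rw [h2, sub_neg_eq_add] at this
        linarith
      rw [hXb, ← hP]
      congr 1
      rw [hP]
      simp [Matrix.transpose_smul]
    · rintro ⟨lam, S, T, hS, hT, hXe⟩
      intro A hA
      rw [hXe, key]
      have : (-(lam • (1:Matrix (Fin (n+1)) (Fin (n+1)) ℝ))) * Aᵀ = -(lam • Aᵀ) := by
        simp [Matrix.smul_mul]
      rw [this, Matrix.trace_neg, Matrix.smul_mul, Matrix.trace_smul, Matrix.trace_smul,
        Matrix.one_mul, Matrix.trace_transpose, hA]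
      simp
  · intro X hX
    obtain ⟨P, Q, R, hQ, hR, hXb⟩ := so_struct n X hX
    set lam : ℝ := Matrix.trace P / (n+1) with hlam
    refine ⟨P - lam • 1, lam, Q, R, ?_, hQ, hR, ?_⟩
    · rw [Matrix.trace_sub, Matrix.trace_smul, Matrix.trace_one, Fintype.card_fin, smul_eq_mul,
        Nat.cast_add, Nat.cast_one]
      simp only [hlam]
      field_simp
      ring
    · rw [hXb, Matrix.fromBlocks_add, Matrix.fromBlocks_inj]
      refine ⟨?_, by simp, by simp, ?_⟩
      · abel
      · simp only [Matrix.transpose_sub, Matrix.transpose_smul, Matrix.transpose_one]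
        abel
  · intro A lam S T hA hS hT heq
    rw [Matrix.fromBlocks_inj] at heq
    obtain ⟨h1, -, -, -⟩ := heq
    rw [h1, Matrix.trace_smul, Matrix.trace_one] at hA
    have hl : lam = 0 := by
      have hn : (n:ℝ) + 1 ≠ 0 := by positivity
      rcases (by simpa using hA : lam = 0 ∨ (n:ℝ)+1 = 0) with h | h
      · exact h
      · exact absurd h hn
    have hA0 : A = 0 := by rw [h1, hl, zero_smul]
    rw [hA0]
    simp [← Matrix.fromBlocks_zero]
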